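/- Let n ≥ 5 with gcd(n,3) = 1, and let A = !![a₁,a₂,a₃; b₁,b₂,b₃; c₁,c₂,c₃] be a real 3×3 matrix with D := det A ≠ 0. Let (xᵢ,yᵢ,pᵢ,qᵢ) ∈ ℝ⁴ for i = 1,…,n with hᵢ := c₁xᵢ+c₂yᵢ+c₃ ≠ 0 and Δ₁₂₃ ≠ 0, Δ₁₂₄ ≠ 0, and let (x̃ᵢ,ỹᵢ,p̃ᵢ,q̃ᵢ) be the prolonged transform of the i-th data. Then zₙ := (∏_{i=5}^{n} Δ₁₂ᵢ)³·(Δ₁₃₄Δ₂₃₄)^{n−3}/(Δ₁₂₃Δ₁₂₄)^{2n−9} is a relative invariant of weight −1 for the diagonal action on n points: z̃ₙ = ((∏_{i=1}^{n} hᵢ)³/Dⁿ) · zₙ, where z̃ₙ is computed from the transformed data. -/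

import Mathlib

set_option maxHeartbeats 1000000

open Matrix

/-- The gradient line `ℓ = (p, q, -p*x - q*y)` of the data `(x, y, p, q)`. -/
noncomputable def gradLine (x y p q : ℝ) : Fin 3 → ℝ := ![p, q, -(p * x) - q * y]

/-- `Δᵢⱼₖ`: the determinant of the 3×3 matrix whose rows are the gradient lines of the
points `i, j, k` of the configuration `(x, y, p, q)`. -/
noncomputable def Delta3 (x y p q : ℕ → ℝ) (i j k : ℕ) : ℝ :=
  Matrix.det (Matrix.of
    ![gradLine (x i) (y i) (p i) (q i),
      gradLine (x j) (y j) (p j) (q j),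
      gradLine (x k) (y k) (p k) (q k)])

lemma gradLine_transform (a1 a2 a3 b1 b2 b3 c1 c2 c3 x y p q : ℝ)
    (hD : Matrix.det !![a1, a2, a3; b1, b2, b3; c1, c2, c3] ≠ 0)
    (hh : c1 * x + c2 * y + c3 ≠ 0) :
    gradLine ((a1 * x + a2 * y + a3) / (c1 * x + c2 * y + c3))
      ((b1 * x + b2 * y + b3) / (c1 * x + c2 * y + c3))
      (((c1 * x + c2 * y + c3) • Matrix.vecMul (gradLine x y p q)
        (!![a1, a2, a3; b1, b2, b3; c1, c2, c3])⁻¹) 0)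
      (((c1 * x + c2 * y + c3) • Matrix.vecMul (gradLine x y p q)
        (!![a1, a2, a3; b1, b2, b3; c1, c2, c3])⁻¹) 1)
    = (c1 * x + c2 * y + c3) • Matrix.vecMul (gradLine x y p q)
        (!![a1, a2, a3; b1, b2, b3; c1, c2, c3])⁻¹ := by
  set A : Matrix (Fin 3) (Fin 3) ℝ := !![a1, a2, a3; b1, b2, b3; c1, c2, c3] with hA
  set m : Fin 3 → ℝ := Matrix.vecMul (gradLine x y p q) A⁻¹ with hm
  have key : m ⬝ᵥ ![a1 * x + a2 * y + a3, b1 * x + b2 * y + b3, c1 * x + c2 * y + c3] = 0 := by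
    have h1 : ![a1 * x + a2 * y + a3, b1 * x + b2 * y + b3, c1 * x + c2 * y + c3]
        = A.mulVec ![x, y, 1] := by
      funext j; fin_cases j <;>
        simp [hA, Matrix.mulVec, dotProduct, Fin.sum_univ_three]
    rw [h1, Matrix.dotProduct_mulVec, hm, Matrix.vecMul_vecMul,
      Matrix.nonsing_inv_mul A (isUnit_iff_ne_zero.mpr hD), Matrix.vecMul_one]
    simp [gradLine, dotProduct, Fin.sum_univ_three]
  funext j
  fin_cases j
  · rfl
  · rfl
  · show -(_ * _) - _ * _ = _
    simp only [Pi.smul_apply, smul_eq_mul]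
    simp only [dotProduct, Fin.sum_univ_three, Matrix.cons_val_zero,
      Matrix.cons_val_one, Matrix.head_cons, Matrix.cons_val_two, Matrix.tail_cons] at key
    simp only [show (⟨2, by norm_num⟩ : Fin 3) = 2 from rfl]
    field_simp
    linear_combination (-1) * key

lemma det_rows_smul_vecMul (A : Matrix (Fin 3) (Fin 3) ℝ)
    (l1 l2 l3 : Fin 3 → ℝ) (h1 h2 h3 : ℝ) :
    Matrix.det (Matrix.of ![h1 • Matrix.vecMul l1 A⁻¹, h2 • Matrix.vecMul l2 A⁻¹,
        h3 • Matrix.vecMul l3 A⁻¹])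
    = h1 * h2 * h3 * (Matrix.det (Matrix.of ![l1, l2, l3])) / A.det := by
  have : Matrix.of ![h1 • Matrix.vecMul l1 A⁻¹, h2 • Matrix.vecMul l2 A⁻¹,
      h3 • Matrix.vecMul l3 A⁻¹]
      = (Matrix.diagonal ![h1, h2, h3] * Matrix.of ![l1, l2, l3]) * A⁻¹ := by
    funext i j
    fin_cases i <;>
      simp [Matrix.mul_apply, Matrix.vecMul, dotProduct, Fin.sum_univ_three,
        Matrix.diagonal] <;> ring
  rw [this, Matrix.det_mul, Matrix.det_mul, Matrix.det_diagonal,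
    Matrix.det_nonsing_inv]
  simp [Fin.prod_univ_three, Ring.inverse_eq_inv']
  ring

lemma key_alg (m : ℕ) (H1 H2 H3 H4 P Q D d3 d4 e1 e2 : ℝ)
    (hH1 : H1 ≠ 0) (hH2 : H2 ≠ 0) (hH3 : H3 ≠ 0) (hH4 : H4 ≠ 0)
    (hP : P ≠ 0) (hD : D ≠ 0) (hd3 : d3 ≠ 0) (hd4 : d4 ≠ 0) :
    ((H1 * H2 / D) ^ (m + 1) * P * Q) ^ 3 *
      (H1 * H3 * H4 * e1 / D * (H2 * H3 * H4 * e2 / D)) ^ (m + 2) /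
      (H1 * H2 * H3 * d3 / D * (H1 * H2 * H4 * d4 / D)) ^ (2 * m + 1)
    = (H1 * H2 * H3 * H4 * P) ^ 3 / D ^ (m + 5) *
      (Q ^ 3 * (e1 * e2) ^ (m + 2) / (d3 * d4) ^ (2 * m + 1)) := by
  field_simp
  ring_nf
  rw [inv_pow, inv_pow, inv_pow, inv_pow]
  field_simp
  ring

/-- For `n ≥ 5` with `gcd(n,3) = 1`, the quantity
`zₙ = (∏_{i=5}^{n} Δ₁₂ᵢ)³ (Δ₁₃₄Δ₂₃₄)^{n−3} / (Δ₁₂₃Δ₁₂₄)^{2n−9}` is a relative invariant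
of weight `−1`: `z̃ₙ = ((∏ᵢ hᵢ)³ / Dⁿ) · zₙ`. -/
theorem zn_relative_invariant_coprime_case (n : ℕ) (hn : 5 ≤ n) (hg : Nat.gcd n 3 = 1)
    (a1 a2 a3 b1 b2 b3 c1 c2 c3 : ℝ)
    (hD : Matrix.det !![a1, a2, a3; b1, b2, b3; c1, c2, c3] ≠ 0)
    (x y p q : ℕ → ℝ)
    (hh : ∀ i ∈ Finset.Icc 1 n, c1 * x i + c2 * y i + c3 ≠ 0)
    (h123 : Delta3 x y p q 1 2 3 ≠ 0)
    (h124 : Delta3 x y p q 1 2 4 ≠ 0)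
    (xt yt pt qt : ℕ → ℝ)
    (hxt : ∀ i ∈ Finset.Icc 1 n,
      xt i = (a1 * x i + a2 * y i + a3) / (c1 * x i + c2 * y i + c3))
    (hyt : ∀ i ∈ Finset.Icc 1 n,
      yt i = (b1 * x i + b2 * y i + b3) / (c1 * x i + c2 * y i + c3))
    (hpt : ∀ i ∈ Finset.Icc 1 n, pt i = ((c1 * x i + c2 * y i + c3) •
      Matrix.vecMul (gradLine (x i) (y i) (p i) (q i))
        (!![a1, a2, a3; b1, b2, b3; c1, c2, c3])⁻¹) 0)
    (hqt : ∀ i ∈ Finset.Icc 1 n, qt i = ((c1 * x i + c2 * y i + c3) •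
      Matrix.vecMul (gradLine (x i) (y i) (p i) (q i))
        (!![a1, a2, a3; b1, b2, b3; c1, c2, c3])⁻¹) 1) :
    (∏ i ∈ Finset.Icc 5 n, Delta3 xt yt pt qt 1 2 i) ^ 3 *
        (Delta3 xt yt pt qt 1 3 4 * Delta3 xt yt pt qt 2 3 4) ^ (n - 3) /
        (Delta3 xt yt pt qt 1 2 3 * Delta3 xt yt pt qt 1 2 4) ^ (2 * n - 9)
      = ((∏ i ∈ Finset.Icc 1 n, (c1 * x i + c2 * y i + c3)) ^ 3 /
            Matrix.det !![a1, a2, a3; b1, b2, b3; c1, c2, c3] ^ n) *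
        ((∏ i ∈ Finset.Icc 5 n, Delta3 x y p q 1 2 i) ^ 3 *
          (Delta3 x y p q 1 3 4 * Delta3 x y p q 2 3 4) ^ (n - 3) /
          (Delta3 x y p q 1 2 3 * Delta3 x y p q 1 2 4) ^ (2 * n - 9)) := by
  set A : Matrix (Fin 3) (Fin 3) ℝ := !![a1, a2, a3; b1, b2, b3; c1, c2, c3] with hA
  set H : ℕ → ℝ := fun i => c1 * x i + c2 * y i + c3 with hH
  -- row transformation
  have hrow : ∀ i ∈ Finset.Icc 1 n,
      gradLine (xt i) (yt i) (pt i) (qt i)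
        = H i • Matrix.vecMul (gradLine (x i) (y i) (p i) (q i)) A⁻¹ := by
    intro i hi
    rw [hxt i hi, hyt i hi, hpt i hi, hqt i hi]
    exact gradLine_transform a1 a2 a3 b1 b2 b3 c1 c2 c3 (x i) (y i) (p i) (q i) hD (hh i hi)
  have hDelta : ∀ i ∈ Finset.Icc 1 n, ∀ j ∈ Finset.Icc 1 n, ∀ k ∈ Finset.Icc 1 n,
      Delta3 xt yt pt qt i j k = H i * H j * H k * Delta3 x y p q i j k / A.det := by
    intro i hi j hj k hk
    unfold Delta3
    rw [hrow i hi, hrow j hj, hrow k hk]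
    exact det_rows_smul_vecMul A _ _ _ _ _ _
  obtain ⟨m, rfl⟩ : ∃ m, n = m + 5 := ⟨n - 5, by omega⟩
  have mem : ∀ i, 1 ≤ i → i ≤ m + 5 → i ∈ Finset.Icc 1 (m + 5) := by
    intro i h1 h2; simp [Finset.mem_Icc]; omega
  have m1 := mem 1 (by omega) (by omega)
  have m2 := mem 2 (by omega) (by omega)
  have m3 := mem 3 (by omega) (by omega)
  have m4 := mem 4 (by omega) (by omega)
  -- rewrite the product of transformed Deltas
  have hprod : ∏ i ∈ Finset.Icc 5 (m + 5), Delta3 xt yt pt qt 1 2 i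
      = (H 1 * H 2 / A.det) ^ (m + 1) * (∏ i ∈ Finset.Icc 5 (m + 5), H i) *
        (∏ i ∈ Finset.Icc 5 (m + 5), Delta3 x y p q 1 2 i) := by
    rw [show (H 1 * H 2 / A.det) ^ (m + 1) = ∏ _i ∈ Finset.Icc 5 (m + 5), (H 1 * H 2 / A.det) by
      rw [Finset.prod_const, Nat.card_Icc]; congr 1]
    rw [← Finset.prod_mul_distrib, ← Finset.prod_mul_distrib]
    apply Finset.prod_congr rfl
    intro i hi
    have hi' : i ∈ Finset.Icc 1 (m + 5) := by
      simp only [Finset.mem_Icc] at hi ⊢; omega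
    rw [hDelta 1 m1 2 m2 i hi']
    ring
  have hsplit : ∏ i ∈ Finset.Icc 1 (m + 5), H i
      = H 1 * H 2 * H 3 * H 4 * ∏ i ∈ Finset.Icc 5 (m + 5), H i := by
    have h04 : (Finset.Ioc 0 4 : Finset ℕ) = {1, 2, 3, 4} := by decide
    have e1 : Finset.Icc 1 (m + 5) = Finset.Ioc 0 (m + 5) := by ext i; simp; omega
    have e2 : Finset.Icc 5 (m + 5) = Finset.Ioc 4 (m + 5) := by ext i; simp; omega
    rw [e1, e2, ← Finset.prod_Ioc_consecutive H (by omega : 0 ≤ 4) (by omega : 4 ≤ m + 5), h04,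
      Finset.prod_insert (by decide), Finset.prod_insert (by decide),
      Finset.prod_insert (by decide), Finset.prod_singleton]
    ring
  rw [hprod, hDelta 1 m1 3 m3 4 m4, hDelta 2 m2 3 m3 4 m4, hDelta 1 m1 2 m2 3 m3,
    hDelta 1 m1 2 m2 4 m4, hsplit]
  rw [show m + 5 - 3 = m + 2 by omega, show 2 * (m + 5) - 9 = 2 * m + 1 by omega]
  have hH1 : H 1 ≠ 0 := hh 1 m1
  have hH2 : H 2 ≠ 0 := hh 2 m2
  have hH3 : H 3 ≠ 0 := hh 3 m3
  have hH4 : H 4 ≠ 0 := hh 4 m4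
  have hP : (∏ i ∈ Finset.Icc 5 (m + 5), H i) ≠ 0 := by
    apply Finset.prod_ne_zero_iff.mpr
    intro i hi
    exact hh i (by simp only [Finset.mem_Icc] at hi ⊢; omega)
  exact key_alg m (H 1) (H 2) (H 3) (H 4) _ _ A.det _ _ _ _ hH1 hH2 hH3 hH4 hP hD h123 h124
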